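/- Let x be a configuration on a torus containing at least one 1 and at least one empty 2×2 window (containing no 1s). Then there exists a 2×2 window that contains either exactly one 1, or two adjacent 1s and two adjacent 0s. -/

import Mathlib

/-- Number of 1s in the 2×2 window at position `c`. -/
def wcount {n₁ n₂ : ℕ} (x : ZMod n₁ × ZMod n₂ → Bool) (c : ZMod n₁ × ZMod n₂) : ℕ :=
  (if x c then 1 else 0) + (if x (c + (1, 0)) then 1 else 0) +
    (if x (c + (0, 1)) then 1 else 0) + (if x (c + (1, 1)) then 1 else 0)

/-- The 2×2 window at `c` is checkered: equal states on each diagonal,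
different states on adjacent cells. -/
def Checkered {n₁ n₂ : ℕ} (x : ZMod n₁ × ZMod n₂ → Bool) (c : ZMod n₁ × ZMod n₂) : Prop :=
  x c = x (c + (1, 1)) ∧ x (c + (1, 0)) = x (c + (0, 1)) ∧ x c ≠ x (c + (1, 0))

lemma wcount_zero_cells {n₁ n₂ : ℕ} {x : ZMod n₁ × ZMod n₂ → Bool} {c : ZMod n₁ × ZMod n₂}
    (h : wcount x c = 0) :
    x c = false ∧ x (c + (1, 0)) = false ∧ x (c + (0, 1)) = false ∧ x (c + (1, 1)) = false := by
  unfold wcount at h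
  split_ifs at h <;> simp_all

lemma step_right {n₁ n₂ : ℕ} {x : ZMod n₁ × ZMod n₂ → Bool}
    (hgood : ∀ c : ZMod n₁ × ZMod n₂, ¬(wcount x c = 1 ∨ (wcount x c = 2 ∧ ¬Checkered x c)))
    {c : ZMod n₁ × ZMod n₂} (h : wcount x c = 0) : wcount x (c + (1, 0)) = 0 := by
  obtain ⟨h0, h1, h2, h3⟩ := wcount_zero_cells h
  have e1 : c + (1, 0) + (0, 1) = c + (1, 1) := by
    rw [add_assoc]; congr 1; simp [Prod.ext_iff]
  have hg := hgood (c + (1, 0))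
  push_neg at hg
  have hw : wcount x (c + (1, 0)) =
      (if x (c + (1, 0) + (1, 0)) then 1 else 0) + (if x (c + (1, 0) + (1, 1)) then 1 else 0) := by
    unfold wcount
    rw [e1, h1, h3]; simp
  rcases Bool.eq_false_or_eq_true (x (c + (1, 0) + (1, 0))) with ha | ha <;>
    rcases Bool.eq_false_or_eq_true (x (c + (1, 0) + (1, 1))) with hb | hb
  · exfalso
    have h2' : wcount x (c + (1, 0)) = 2 := by rw [hw, ha, hb]; rfl
    have hc := (hg.2 h2').1
    rw [h1, hb] at hc
    exact absurd hc (by simp)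
  · exact absurd (by rw [hw, ha, hb]; rfl : wcount x (c + (1, 0)) = 1) hg.1
  · exact absurd (by rw [hw, ha, hb]; rfl : wcount x (c + (1, 0)) = 1) hg.1
  · rw [hw, ha, hb]; rfl

lemma step_up {n₁ n₂ : ℕ} {x : ZMod n₁ × ZMod n₂ → Bool}
    (hgood : ∀ c : ZMod n₁ × ZMod n₂, ¬(wcount x c = 1 ∨ (wcount x c = 2 ∧ ¬Checkered x c)))
    {c : ZMod n₁ × ZMod n₂} (h : wcount x c = 0) : wcount x (c + (0, 1)) = 0 := by
  obtain ⟨h0, h1, h2, h3⟩ := wcount_zero_cells h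
  have e1 : c + (0, 1) + (1, 0) = c + (1, 1) := by
    rw [add_assoc]; congr 1; simp [Prod.ext_iff]
  have hg := hgood (c + (0, 1))
  push_neg at hg
  have hw : wcount x (c + (0, 1)) =
      (if x (c + (0, 1) + (0, 1)) then 1 else 0) + (if x (c + (0, 1) + (1, 1)) then 1 else 0) := by
    unfold wcount
    rw [e1, h2, h3]; simp
  rcases Bool.eq_false_or_eq_true (x (c + (0, 1) + (0, 1))) with ha | ha <;>
    rcases Bool.eq_false_or_eq_true (x (c + (0, 1) + (1, 1))) with hb | hb
  · exfalso
    have h2' : wcount x (c + (0, 1)) = 2 := by rw [hw, ha, hb]; rfl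
    have hc := (hg.2 h2').2.1
    rw [e1, h3, ha] at hc
    exact absurd hc (by simp)
  · exact absurd (by rw [hw, ha, hb]; rfl : wcount x (c + (0, 1)) = 1) hg.1
  · exact absurd (by rw [hw, ha, hb]; rfl : wcount x (c + (0, 1)) = 1) hg.1
  · rw [hw, ha, hb]; rfl

/-- if `x` contains at least one 1 and at least one empty 2×2
window, then some 2×2 window contains either exactly one 1, or two adjacent 1s
and two adjacent 0s (i.e., two 1s not placed diagonally). -/
theorem empty_window_gives_good_window
    (n₁ n₂ : ℕ) [NeZero n₁] [NeZero n₂] (h₁ : 2 ≤ n₁) (h₂ : 2 ≤ n₂)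
    (x : ZMod n₁ × ZMod n₂ → Bool)
    (hone : ∃ c : ZMod n₁ × ZMod n₂, x c = true)
    (hempty : ∃ c : ZMod n₁ × ZMod n₂, wcount x c = 0) :
    ∃ c : ZMod n₁ × ZMod n₂,
      wcount x c = 1 ∨ (wcount x c = 2 ∧ ¬Checkered x c) := by
  by_contra hcon
  push_neg at hcon
  have hgood : ∀ c : ZMod n₁ × ZMod n₂, ¬(wcount x c = 1 ∨ (wcount x c = 2 ∧ ¬Checkered x c)) := by
    intro c
    rintro (h | ⟨h, h'⟩)
    · exact (hcon c).1 h
    · exact h' ((hcon c).2 h)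
  obtain ⟨c₀, hc₀⟩ := hempty
  have key : ∀ a b : ℕ, wcount x (c₀ + (((a : ℕ) : ZMod n₁), ((b : ℕ) : ZMod n₂))) = 0 := by
    intro a
    induction a with
    | zero =>
      intro b
      induction b with
      | zero => simpa [show ((0 : ZMod n₁), (0 : ZMod n₂)) = 0 from rfl] using hc₀
      | succ b ih =>
        have h := step_up hgood ih
        have e : c₀ + ((((0 : ℕ)) : ZMod n₁), (((b : ℕ)) : ZMod n₂)) + (0, 1)
            = c₀ + ((((0 : ℕ)) : ZMod n₁), (((b + 1 : ℕ)) : ZMod n₂)) := by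
          rw [add_assoc]; congr 1
          ext <;> simp [Prod.fst_add, Prod.snd_add] <;> push_cast <;> ring
        rwa [e] at h
    | succ a ih =>
      intro b
      have h := step_right hgood (ih b)
      have e : c₀ + (((a : ℕ) : ZMod n₁), ((b : ℕ) : ZMod n₂)) + (1, 0)
          = c₀ + ((((a + 1 : ℕ)) : ZMod n₁), ((b : ℕ) : ZMod n₂)) := by
        rw [add_assoc]; congr 1
        ext <;> simp [Prod.fst_add, Prod.snd_add] <;> push_cast <;> ring
      rwa [e] at h
  obtain ⟨c, hc⟩ := hone
  have hall : wcount x c = 0 := by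
    have h := key (c - c₀).1.val (c - c₀).2.val
    have e : c₀ + ((((c - c₀).1.val : ℕ) : ZMod n₁), (((c - c₀).2.val : ℕ) : ZMod n₂)) = c := by
      rw [ZMod.natCast_val, ZMod.natCast_val, ZMod.cast_id, ZMod.cast_id]
      ext <;> simp
    rwa [e] at h
  have h0 := (wcount_zero_cells hall).1
  rw [hc] at h0
  exact absurd h0 (by simp)
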